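/- arXiv:1111.2783 — 3 statements merged into one kernel-verified Lean document; each statement's English description precedes it below -/
import Mathlib

section
/- Fix integers k ≥ 1 and m ≥ 1. The number of distinct partitions of the form R_{i_1} ∪ R_{i_2} ∪ ⋯ ∪ R_{i_{m-1}} with i_1, …, i_{m-1} ∈ {1, …, k} equals the binomial coefficient C(m−1+k−1, k−1). -/
open scoped RealInnerProductSpace

/-- The hook length of the cell `c` (0-indexed) in the Young diagram `μ`:
arm + leg + 1 = rowLen c.1 + colLen c.2 - c.1 - c.2 - 1. -/
def YoungDiagram.hook (μ : YoungDiagram) (c : ℕ × ℕ) : ℕ :=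
  μ.rowLen c.1 + μ.colLen c.2 - c.1 - c.2 - 1

/-- A partition is a `t`-core if no cell has hook length `t`. -/
def YoungDiagram.IsCore (μ : YoungDiagram) (t : ℕ) : Prop :=
  ∀ c ∈ μ.cells, μ.hook c ≠ t

/-- `c` is an addable cell of `μ`: it is not in `μ` and inserting it yields a Young diagram. -/
def YoungDiagram.IsAddable (μ : YoungDiagram) (c : ℕ × ℕ) : Prop :=
  c ∉ μ ∧ ∃ ν : YoungDiagram, ν.cells = insert c μ.cells

/-- `c` is a removable cell of `μ`: it is in `μ` and erasing it yields a Young diagram. -/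
def YoungDiagram.IsRemovable (μ : YoungDiagram) (c : ℕ × ℕ) : Prop :=
  c ∈ μ ∧ ∃ ν : YoungDiagram, ν.cells = μ.cells.erase c

/-- The residue mod `k+1` of a cell: its content `c.2 - c.1` taken in `ZMod (k+1)`. -/
def residue (k : ℕ) (c : ℕ × ℕ) : ZMod (k + 1) :=
  (((c.2 : ℤ) - (c.1 : ℤ) : ℤ) : ZMod (k + 1))

/-- The rectangular Young diagram with `r` rows and `c` columns. -/
def rectangle (r c : ℕ) : YoungDiagram where
  cells := Finset.range r ×ˢ Finset.range c
  isLowerSet := by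
    rintro ⟨a, b⟩ ⟨x, y⟩ ⟨h1, h2⟩ h
    simp only [Finset.coe_product, Set.mem_prod, Finset.mem_coe, Finset.mem_range] at *
    exact ⟨lt_of_le_of_lt h1 h.1, lt_of_le_of_lt h2 h.2⟩

/-- The rectangle `R_i = (i^{k-i+1})`, whose largest hook length is `k`. -/
def kRectangle (k i : ℕ) : YoungDiagram := rectangle (k - i + 1) i

/-- The multiset of (nonzero) parts of a Young diagram. -/
def partsOf (μ : YoungDiagram) : Multiset ℕ := (μ.rowLens : Multiset ℕ)

/-- The Young diagram whose parts are the given multiset, sorted into non-increasing order. -/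
def diagramOfParts (s : Multiset ℕ) : YoungDiagram :=
  YoungDiagram.ofRowLens (s.sort (· ≥ ·)) (s.pairwise_sort _).sortedGE

/-- `R_{i_1} ∪ ⋯ ∪ R_{i_{m-1}}`: the partition obtained by combining the parts of
the rectangles `R_i` for `i` ranging over the multiset `S` (with multiplicity). -/
def unionRects (k : ℕ) (S : Multiset ℕ) : YoungDiagram :=
  diagramOfParts ((S.map fun i => partsOf (kRectangle k i)).sum)

/-- The Lapointe–Morse map: the `i`-th entry of `pMap k μ` is the number of cells in
row `i` of `μ` whose hook length is at most `k`. -/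
def pMap (k : ℕ) (μ : YoungDiagram) (i : ℕ) : ℕ :=
  ((Finset.range (μ.rowLen i)).filter fun j => μ.hook (i, j) ≤ k).card

/-- The simple roots of type `A_k` in the standard realization. -/
noncomputable def simpleRoot (k : ℕ) (i : Fin k) : EuclideanSpace ℝ (Fin (k + 1)) :=
  EuclideanSpace.single i.castSucc 1 - EuclideanSpace.single i.succ 1

/-- The highest root `φ = α_1 + ⋯ + α_k` of type `A_k`. -/
noncomputable def highestRoot (k : ℕ) : EuclideanSpace ℝ (Fin (k + 1)) :=
  ∑ i, simpleRoot k i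

lemma mem_rectangle {r c i j : ℕ} : (i, j) ∈ rectangle r c ↔ i < r ∧ j < c := by
  show (i, j) ∈ (rectangle r c).cells ↔ _
  simp [rectangle]

lemma rowLen_rectangle {r c i : ℕ} (h : i < r) : (rectangle r c).rowLen i = c := by
  refine le_antisymm ?_ ?_
  · by_contra h'
    push_neg at h'
    have := YoungDiagram.mem_iff_lt_rowLen.mpr h'
    rw [mem_rectangle] at this
    omega
  · rcases Nat.eq_zero_or_pos c with hc | hc
    · omega
    · have : (i, c - 1) ∈ rectangle r c := mem_rectangle.mpr ⟨h, by omega⟩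
      rw [YoungDiagram.mem_iff_lt_rowLen] at this
      omega

lemma colLen_rectangle0 {r c : ℕ} (hc : 0 < c) : (rectangle r c).colLen 0 = r := by
  refine le_antisymm ?_ ?_
  · by_contra h'
    push_neg at h'
    have := YoungDiagram.mem_iff_lt_colLen.mpr h'
    rw [mem_rectangle] at this
    omega
  · rcases Nat.eq_zero_or_pos r with hr | hr
    · omega
    · have : ((r - 1 : ℕ), 0) ∈ rectangle r c := mem_rectangle.mpr ⟨by omega, hc⟩
      rw [YoungDiagram.mem_iff_lt_colLen] at this
      omega

lemma partsOf_kRectangle {k i : ℕ} (hi : 1 ≤ i) :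
    partsOf (kRectangle k i) = Multiset.replicate (k - i + 1) i := by
  unfold partsOf kRectangle
  rw [YoungDiagram.rowLens, colLen_rectangle0 hi]
  have : (List.range (k - i + 1)).map (rectangle (k - i + 1) i).rowLen
      = List.replicate (k - i + 1) i := by
    refine List.eq_replicate_iff.mpr ⟨by simp, ?_⟩
    intro b hb
    simp only [List.mem_map, List.mem_range] at hb
    obtain ⟨a, ha, rfl⟩ := hb
    exact rowLen_rectangle ha
  rw [this, Multiset.coe_replicate]

lemma partsOf_diagramOfParts {s : Multiset ℕ} (h : ∀ x ∈ s, 0 < x) :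
    partsOf (diagramOfParts s) = s := by
  unfold partsOf diagramOfParts
  rw [YoungDiagram.rowLens_ofRowLens_eq_self
    (fun x hx => h x (by rwa [Multiset.mem_sort] at hx))]
  exact s.sort_eq _

lemma count_sum_replicate (k j : ℕ) (S : Multiset ℕ) :
    ((S.map fun i => Multiset.replicate (k - i + 1) i).sum).count j
      = (k - j + 1) * S.count j := by
  induction S using Multiset.induction with
  | empty => simp
  | cons a s ih =>
    simp only [Multiset.map_cons, Multiset.sum_cons, Multiset.count_add, ih,
      Multiset.count_cons, Multiset.count_replicate]
    by_cases hja : j = a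
    · subst hja; simp [Nat.mul_add, Nat.add_comm]
    · simp [hja, Ne.symm hja]

lemma pos_of_mem_sum_replicate {k x : ℕ} {S : Multiset ℕ} (hS : ∀ i ∈ S, 1 ≤ i)
    (hx : x ∈ (S.map fun i => Multiset.replicate (k - i + 1) i).sum) : 1 ≤ x := by
  induction S using Multiset.induction with
  | empty => simp at hx
  | cons a s ih =>
    simp only [Multiset.map_cons, Multiset.sum_cons, Multiset.mem_add] at hx
    rcases hx with hx | hx
    · rw [Multiset.eq_of_mem_replicate hx]
      exact hS a (Multiset.mem_cons_self a s)
    · exact ih (fun i hi => hS i (Multiset.mem_cons_of_mem hi)) hx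

lemma partsOf_unionRects {k : ℕ} {S : Multiset ℕ} (hS : ∀ i ∈ S, 1 ≤ i) :
    partsOf (unionRects k S) = (S.map fun i => Multiset.replicate (k - i + 1) i).sum := by
  unfold unionRects
  have hmap : S.map (fun i => partsOf (kRectangle k i))
      = S.map (fun i => Multiset.replicate (k - i + 1) i) :=
    Multiset.map_congr rfl fun i hi => partsOf_kRectangle (hS i hi)
  rw [hmap, partsOf_diagramOfParts (fun x hx => pos_of_mem_sum_replicate hS hx)]

lemma unionRects_inj {k : ℕ} {S T : Multiset ℕ} (hS : ∀ i ∈ S, 1 ≤ i) (hT : ∀ i ∈ T, 1 ≤ i)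
    (h : unionRects k S = unionRects k T) : S = T := by
  have hsum : (S.map fun i => Multiset.replicate (k - i + 1) i).sum
      = (T.map fun i => Multiset.replicate (k - i + 1) i).sum := by
    rw [← partsOf_unionRects hS, ← partsOf_unionRects hT, h]
  ext j
  have := congrArg (Multiset.count j) hsum
  rw [count_sum_replicate, count_sum_replicate] at this
  exact Nat.eq_of_mul_eq_mul_left (by omega) this

/-- For `k ≥ 1` and `m ≥ 1`, the number of distinct partitions of the
form `R_{i_1} ∪ ⋯ ∪ R_{i_{m-1}}` with `i_1, …, i_{m-1} ∈ {1, …, k}` equals the binomial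
coefficient `C(m-1+k-1, k-1)`. -/
theorem card_rectangle_unions (k m : ℕ) (hk : 1 ≤ k) (hm : 1 ≤ m) :
    Set.ncard {lam : YoungDiagram |
        ∃ S : Multiset ℕ, Multiset.card S = m - 1 ∧ (∀ i ∈ S, 1 ≤ i ∧ i ≤ k) ∧
          lam = unionRects k S} = Nat.choose (m - 1 + (k - 1)) (k - 1) := by
  classical
  set f : Sym (Fin k) (m - 1) → YoungDiagram :=
    fun s => unionRects k (Multiset.map (fun x : Fin k => (x : ℕ) + 1) s.1) with hf
  have hpos : ∀ (s : Sym (Fin k) (m - 1)) (i : ℕ),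
      i ∈ Multiset.map (fun x : Fin k => (x : ℕ) + 1) s.1 → 1 ≤ i := by
    intro s i hi
    simp only [Multiset.mem_map] at hi
    obtain ⟨x, _, rfl⟩ := hi
    omega
  have hinj : Function.Injective f := by
    intro s t hst
    have h1 := unionRects_inj (hpos s) (hpos t) hst
    have h2 : s.1 = t.1 :=
      Multiset.map_injective (fun a b hab => Fin.val_injective
        (by omega)) h1
    exact Subtype.ext h2
  have hset : {lam : YoungDiagram |
      ∃ S : Multiset ℕ, Multiset.card S = m - 1 ∧ (∀ i ∈ S, 1 ≤ i ∧ i ≤ k) ∧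
        lam = unionRects k S} = ↑(Finset.image f Finset.univ) := by
    ext lam
    simp only [Set.mem_setOf_eq, Finset.coe_image, Finset.coe_univ, Set.image_univ,
      Set.mem_range]
    constructor
    · rintro ⟨S, hcard, hmem, rfl⟩
      refine ⟨⟨S.attach.map (fun x => (⟨x.1 - 1, by
        have := hmem x.1 x.2; omega⟩ : Fin k)), by simp [hcard]⟩, ?_⟩
      show unionRects k _ = unionRects k S
      congr 1
      rw [Multiset.map_map]
      calc S.attach.map ((fun x : Fin k => (x : ℕ) + 1) ∘
            (fun x : {a // a ∈ S} => (⟨x.1 - 1, by have := hmem x.1 x.2; omega⟩ : Fin k)))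
          = S.attach.map Subtype.val := Multiset.map_congr rfl (fun x hx => by
            have := hmem x.1 x.2
            simp only [Function.comp_apply]
            omega)
        _ = S := Multiset.attach_map_val S
    · rintro ⟨s, rfl⟩
      refine ⟨Multiset.map (fun x : Fin k => (x : ℕ) + 1) s.1, ?_, ?_, rfl⟩
      · rw [Multiset.card_map]
        exact s.2
      · intro i hi
        simp only [Multiset.mem_map] at hi
        obtain ⟨x, _, rfl⟩ := hi
        have := x.isLt
        omega
  rw [hset, Set.ncard_coe_finset, Finset.card_image_of_injective _ hinj,
    Finset.card_univ, Sym.card_sym_eq_choose, Fintype.card_fin]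
  rw [show k + (m - 1) - 1 = m - 1 + (k - 1) by omega]
  exact Nat.choose_symm_of_eq_add (by omega)
end

section
/- Fix an integer k ≥ 1. A (k+1)-core cannot have both a removable cell and an addable cell of the same residue: for every (k+1)-core λ and every r ∈ ℤ/(k+1)ℤ, it is not the case that λ has both a removable cell whose content is congruent to r modulo k+1 and an addable cell whose content is congruent to r modulo k+1. -/
open scoped RealInnerProductSpace

namespace CoreAux

/-- the "beta value" of row x -/
def bval (μ : YoungDiagram) (x : ℕ) : ℤ := (μ.rowLen x : ℤ) - x - 1

def beta (μ : YoungDiagram) (v : ℤ) : Prop := ∃ x : ℕ, bval μ x = v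

lemma bval_anti (μ : YoungDiagram) {x1 x2 : ℕ} (h : x1 ≤ x2) :
    bval μ x2 ≤ bval μ x1 - ((x2 : ℤ) - x1) := by
  have := μ.rowLen_anti x1 x2 h
  unfold bval; omega

lemma cover (μ : YoungDiagram) (v : ℤ) :
    beta μ v ∨ ∃ y : ℕ, (y : ℤ) - μ.colLen y = v := by
  by_cases hv : v < -(μ.colLen 0 : ℤ)
  · left
    refine ⟨(-v - 1).toNat, ?_⟩
    have hx : ((-v - 1).toNat : ℤ) = -v - 1 := Int.toNat_of_nonneg (by omega)
    have h0 : μ.rowLen (-v - 1).toNat = 0 := by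
      by_contra h
      have h1 : ((-v - 1).toNat, 0) ∈ μ := YoungDiagram.mem_iff_lt_rowLen.2 (Nat.pos_of_ne_zero h)
      have h2 := YoungDiagram.mem_iff_lt_colLen.1 h1
      omega
    unfold bval; rw [h0]; omega
  · push_neg at hv
    have hex : ∃ y : ℕ, v < (y : ℤ) - μ.colLen y := by
      refine ⟨(v + μ.colLen 0).toNat + 1, ?_⟩
      have h1 : μ.colLen ((v + μ.colLen 0).toNat + 1) ≤ μ.colLen 0 :=
        μ.colLen_anti 0 _ (Nat.zero_le _)
      have h2 : (v + (μ.colLen 0 : ℤ)) ≤ ((v + μ.colLen 0).toNat : ℤ) := Int.self_le_toNat _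
      push_cast; omega
    classical
    obtain ⟨y0, hy0, hmin⟩ : ∃ y0 : ℕ, (v < (y0 : ℤ) - μ.colLen y0) ∧
        ∀ z < y0, ¬ v < (z : ℤ) - μ.colLen z :=
      ⟨Nat.find hex, Nat.find_spec hex, fun z hz => Nat.find_min hex hz⟩
    have hpos : y0 ≠ 0 := by
      intro h
      rw [h] at hy0
      simp only [Nat.cast_zero, zero_sub] at hy0
      omega
    obtain ⟨y, rfl⟩ : ∃ y, y0 = y + 1 := ⟨y0 - 1, by omega⟩
    have hle : ¬ v < (y : ℤ) - μ.colLen y := hmin y (by omega)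
    push_neg at hle
    by_cases heq : (y : ℤ) - μ.colLen y = v
    · exact Or.inr ⟨y, heq⟩
    · left
      have hlt : (y : ℤ) - μ.colLen y < v := lt_of_le_of_ne hle heq
      have hmono : μ.colLen (y + 1) ≤ μ.colLen y := μ.colLen_anti y (y+1) (by omega)
      -- v = y - s with colLen (y+1) ≤ s < colLen y
      have hs0 : 0 ≤ (y : ℤ) - v := by push_cast at hy0; omega
      set s := ((y : ℤ) - v).toNat with hsdef
      have hscast : (s : ℤ) = (y : ℤ) - v := Int.toNat_of_nonneg hs0
      have hslt : s < μ.colLen y := by omega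
      have hsge : μ.colLen (y + 1) ≤ s := by push_cast at hy0; omega
      have hm1 : (s, y) ∈ μ := YoungDiagram.mem_iff_lt_colLen.2 hslt
      have hm2 : (s, y + 1) ∉ μ := fun h => absurd (YoungDiagram.mem_iff_lt_colLen.1 h) (by omega)
      have hr1 : y < μ.rowLen s := YoungDiagram.mem_iff_lt_rowLen.1 hm1
      have hr2 : μ.rowLen s ≤ y + 1 := by
        by_contra h
        exact hm2 (YoungDiagram.mem_iff_lt_rowLen.2 (by omega))
      refine ⟨s, ?_⟩
      unfold bval; omega

lemma hook_of_gap (μ : YoungDiagram) {t : ℕ} (ht : 1 ≤ t) {x : ℕ}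
    (hgap : ¬ beta μ (bval μ x - t)) :
    ∃ c ∈ μ.cells, μ.hook c = t := by
  rcases cover μ (bval μ x - t) with h | ⟨y, hy⟩
  · exact absurd h hgap
  · unfold bval at hy
    have hrow : y < μ.rowLen x := by
      by_contra h
      push_neg at h
      have hnot : (x, y) ∉ μ := fun hm => absurd (YoungDiagram.mem_iff_lt_rowLen.1 hm) (by omega)
      have hcol : μ.colLen y ≤ x := by
        by_contra hc
        exact hnot (YoungDiagram.mem_iff_lt_colLen.2 (by omega))
      omega
    have hmem : (x, y) ∈ μ := YoungDiagram.mem_iff_lt_rowLen.2 hrow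
    have hcol : x < μ.colLen y := YoungDiagram.mem_iff_lt_colLen.1 hmem
    refine ⟨(x, y), (YoungDiagram.mem_cells _).2 hmem, ?_⟩
    unfold YoungDiagram.hook
    simp only
    omega

lemma beta_sub (μ : YoungDiagram) {t : ℕ} (ht : 1 ≤ t) (hcore : μ.IsCore t)
    {v : ℤ} (hv : beta μ v) : beta μ (v - t) := by
  rcases hv with ⟨x, rfl⟩
  by_contra h
  obtain ⟨c, hc, hhook⟩ := hook_of_gap μ ht h
  exact hcore c hc hhook

lemma beta_sub_mul (μ : YoungDiagram) {t : ℕ} (ht : 1 ≤ t) (hcore : μ.IsCore t)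
    (m : ℕ) {v : ℤ} (hv : beta μ v) : beta μ (v - m * t) := by
  induction m with
  | zero => simpa using hv
  | succ n ih =>
      have h2 := beta_sub μ ht hcore ih
      have : v - (n : ℤ) * t - t = v - (↑(n+1)) * t := by push_cast; ring
      rwa [this] at h2

lemma removable_beta (μ : YoungDiagram) {c : ℕ × ℕ} (h : μ.IsRemovable c) :
    beta μ ((c.2 : ℤ) - c.1) ∧ ¬ beta μ ((c.2 : ℤ) - c.1 - 1) := by
  obtain ⟨hc, ν, hν⟩ := h
  obtain ⟨x, j⟩ := c
  simp only at *
  have hjlt : j < μ.rowLen x := YoungDiagram.mem_iff_lt_rowLen.1 hc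
  have hjeq : j = μ.rowLen x - 1 := by
    by_contra hne
    have hmem : (x, j + 1) ∈ μ := YoungDiagram.mem_iff_lt_rowLen.2 (by omega)
    have h1 : (x, j + 1) ∈ ν.cells := by
      rw [hν]; exact Finset.mem_erase.2 ⟨by simp, (YoungDiagram.mem_cells _).2 hmem⟩
    have h2 : (x, j) ∈ (ν.cells : Set (ℕ × ℕ)) :=
      ν.isLowerSet (Prod.mk_le_mk.2 ⟨le_refl x, by omega⟩) h1
    rw [hν] at h2
    exact (Finset.mem_erase.1 (Finset.mem_coe.1 h2)).1 rfl
  have hnext : μ.rowLen (x + 1) < μ.rowLen x := by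
    by_contra hge
    push_neg at hge
    have hmem : (x + 1, j) ∈ μ := YoungDiagram.mem_iff_lt_rowLen.2 (by omega)
    have h1 : (x + 1, j) ∈ ν.cells := by
      rw [hν]; exact Finset.mem_erase.2 ⟨by simp, (YoungDiagram.mem_cells _).2 hmem⟩
    have h2 : (x, j) ∈ (ν.cells : Set (ℕ × ℕ)) :=
      ν.isLowerSet (Prod.mk_le_mk.2 ⟨by omega, le_refl j⟩) h1
    rw [hν] at h2
    exact (Finset.mem_erase.1 (Finset.mem_coe.1 h2)).1 rfl
  constructor
  · exact ⟨x, by unfold bval; omega⟩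
  · rintro ⟨x', hx'⟩
    unfold bval at hx'
    rcases le_or_gt x' x with hle | hlt
    · have := bval_anti μ hle
      unfold bval at this
      omega
    · have := bval_anti μ (show x + 1 ≤ x' by omega)
      unfold bval at this
      omega

lemma addable_beta (μ : YoungDiagram) {c : ℕ × ℕ} (h : μ.IsAddable c) :
    beta μ ((c.2 : ℤ) - c.1 - 1) ∧ ¬ beta μ ((c.2 : ℤ) - c.1) := by
  obtain ⟨hc, ν, hν⟩ := h
  obtain ⟨a, j⟩ := c
  simp only at *
  have hjge : μ.rowLen a ≤ j := by
    by_contra hlt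
    exact hc (YoungDiagram.mem_iff_lt_rowLen.2 (by omega))
  have hjeq : j = μ.rowLen a := by
    by_contra hne
    have h1 : (a, j) ∈ (ν.cells : Set (ℕ × ℕ)) := by
      rw [hν]; simp
    have h2 : (a, μ.rowLen a) ∈ (ν.cells : Set (ℕ × ℕ)) :=
      ν.isLowerSet (Prod.mk_le_mk.2 ⟨le_refl a, by omega⟩) h1
    rw [hν] at h2
    simp only [Finset.coe_insert, Set.mem_insert_iff, Finset.mem_coe, Prod.mk.injEq] at h2
    rcases h2 with h2 | h2
    · omega
    · have := YoungDiagram.mem_iff_lt_rowLen.1 ((YoungDiagram.mem_cells _).1 h2)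
      omega
  constructor
  · exact ⟨a, by unfold bval; omega⟩
  · rintro ⟨x', hx'⟩
    unfold bval at hx'
    rcases le_or_gt a x' with hle | hlt
    · have := bval_anti μ hle
      unfold bval at this
      omega
    · -- x' < a, so a ≥ 1; row a-1 contains (a-1, j)
      have ha1 : x' + 1 ≤ a := hlt
      have h1 : ((a - 1 : ℕ), j) ∈ (ν.cells : Set (ℕ × ℕ)) := by
        have hm : (a, j) ∈ (ν.cells : Set (ℕ × ℕ)) := by rw [hν]; simp
        exact ν.isLowerSet (Prod.mk_le_mk.2 ⟨by omega, le_refl j⟩) hm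
      rw [hν] at h1
      simp only [Finset.coe_insert, Set.mem_insert_iff, Finset.mem_coe, Prod.mk.injEq] at h1
      have hrow : j < μ.rowLen (a - 1) := by
        rcases h1 with h1 | h1
        · omega
        · exact YoungDiagram.mem_iff_lt_rowLen.1 ((YoungDiagram.mem_cells _).1 h1)
      have := bval_anti μ (show x' ≤ a - 1 by omega)
      unfold bval at this
      have hcast : ((a - 1 : ℕ) : ℤ) = (a : ℤ) - 1 := by omega
      omega

end CoreAux

/-- A `(k+1)`-core cannot have both a removable cell and an addable cell
of the same residue modulo `k+1`. -/
theorem no_removable_and_addable_of_same_residue (k : ℕ) (hk : 1 ≤ k)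
    (lam : YoungDiagram) (hcore : lam.IsCore (k + 1)) (r : ZMod (k + 1)) :
    ¬ ((∃ c : ℕ × ℕ, lam.IsRemovable c ∧ residue k c = r) ∧
       (∃ c : ℕ × ℕ, lam.IsAddable c ∧ residue k c = r)) := by
  rintro ⟨⟨c, hc, hcr⟩, d, hd, hdr⟩
  obtain ⟨he, he1⟩ := CoreAux.removable_beta lam hc
  obtain ⟨hw1, hw⟩ := CoreAux.addable_beta lam hd
  set e := (c.2 : ℤ) - c.1 with hedef
  set w := (d.2 : ℤ) - d.1 with hwdef
  have ht : 1 ≤ k + 1 := by omega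
  have hres : residue k c = residue k d := hcr.trans hdr.symm
  unfold residue at hres
  rw [← hedef, ← hwdef] at hres
  have hmod := (ZMod.intCast_eq_intCast_iff e w _).1 hres
  obtain ⟨z, hz⟩ := Int.ModEq.dvd hmod
  rcases le_or_gt 0 z with hz0 | hz0
  · -- w - e = (k+1) * z  with z ≥ 0
    apply he1
    have hb := CoreAux.beta_sub_mul lam ht hcore z.toNat hw1
    have hzc : (z.toNat : ℤ) = z := Int.toNat_of_nonneg hz0
    have heq : w - 1 - (z.toNat : ℤ) * ((k + 1 : ℕ) : ℤ) = e - 1 := by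
      rw [hzc]; linear_combination hz
    rwa [heq] at hb
  · -- e - w = (k+1) * (-z)
    apply hw
    have hb := CoreAux.beta_sub_mul lam ht hcore (-z).toNat he
    have hzc : ((-z).toNat : ℤ) = -z := Int.toNat_of_nonneg (by omega)
    have heq : e - ((-z).toNat : ℤ) * ((k + 1 : ℕ) : ℤ) = w := by
      rw [hzc]; linear_combination -hz
    rwa [heq] at hb
end

section
/- Fix an integer k ≥ 1. The Lapointe–Morse map 𝔭, which sends a (k+1)-core μ to the sequence whose i-th entry is the number of cells (i,j) in row i of μ with hook length at most k, is a bijection from the set of (k+1)-cores onto the set of k-bounded partitions; in particular, for every (k+1)-core μ the image 𝔭(μ) is a partition (its entries are non-increasing) all of whose parts are at most k. -/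
open scoped RealInnerProductSpace

namespace LM

/-- beta numbers -/
def bSeq (μ : YoungDiagram) (i : ℕ) : ℤ := (μ.rowLen i : ℤ) - i

/-- co-beta numbers -/
def cSeq (μ : YoungDiagram) (j : ℕ) : ℤ := (j : ℤ) + 1 - μ.colLen j

lemma bSeq_strictAnti (μ : YoungDiagram) : StrictAnti (bSeq μ) := by
  apply strictAnti_nat_of_succ_lt
  intro n
  have := μ.rowLen_anti n (n+1) (Nat.le_succ n)
  unfold bSeq; push_cast; omega

lemma cSeq_strictMono (μ : YoungDiagram) : StrictMono (cSeq μ) := by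
  apply strictMono_nat_of_lt_succ
  intro n
  have := μ.colLen_anti n (n+1) (Nat.le_succ n)
  unfold cSeq; push_cast; omega

lemma gap {b : ℕ → ℤ} (hb : StrictAnti b) (i d : ℕ) : b (i + d) + d ≤ b i := by
  induction d with
  | zero => simp
  | succ d ih =>
    have h1 : b (i + d + 1) < b (i + d) := hb (by omega)
    have h2 : i + (d + 1) = i + d + 1 := by omega
    rw [h2]
    push_cast
    omega

lemma rowLen_eq_zero {μ : YoungDiagram} {i : ℕ} (hi : μ.colLen 0 ≤ i) : μ.rowLen i = 0 := by
  have : (i, 0) ∉ μ := by rw [YoungDiagram.mem_iff_lt_colLen]; omega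
  rw [YoungDiagram.mem_iff_lt_rowLen] at this
  omega

lemma bSeq_eq_neg {μ : YoungDiagram} {i : ℕ} (hi : μ.colLen 0 ≤ i) : bSeq μ i = -i := by
  unfold bSeq; rw [rowLen_eq_zero hi]; simp

lemma hook_cast {μ : YoungDiagram} {i j : ℕ} (h : (i, j) ∈ μ) :
    (μ.hook (i, j) : ℤ) = bSeq μ i - cSeq μ j ∧ 1 ≤ μ.hook (i, j) := by
  have h1 : j < μ.rowLen i := YoungDiagram.mem_iff_lt_rowLen.mp h
  have h2 : i < μ.colLen j := YoungDiagram.mem_iff_lt_colLen.mp h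
  unfold YoungDiagram.hook bSeq cSeq
  simp only
  constructor
  · push_cast; omega
  · omega

lemma cSeq_lt_iff {μ : YoungDiagram} {i j : ℕ} : cSeq μ j < bSeq μ i ↔ j < μ.rowLen i := by
  constructor
  · intro h
    by_contra hc
    have h1 : ¬ (i, j) ∈ μ := by rw [YoungDiagram.mem_iff_lt_rowLen]; omega
    rw [YoungDiagram.mem_iff_lt_colLen] at h1
    unfold cSeq bSeq at h
    omega
  · intro h
    have hm : (i, j) ∈ μ := YoungDiagram.mem_iff_lt_rowLen.mpr h
    have := hook_cast hm
    omega

lemma disj (μ : YoungDiagram) (m j : ℕ) : bSeq μ m ≠ cSeq μ j := by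
  intro h
  unfold bSeq cSeq at h
  by_cases hc : j < μ.rowLen m
  · have h2 : m < μ.colLen j := YoungDiagram.mem_iff_lt_colLen.mp
      (YoungDiagram.mem_iff_lt_rowLen.mpr hc)
    omega
  · have h2 : ¬ m < μ.colLen j := fun hx => hc
      (YoungDiagram.mem_iff_lt_rowLen.mp (YoungDiagram.mem_iff_lt_colLen.mpr hx))
    omega

lemma cover (μ : YoungDiagram) (x : ℤ) : (∃ m, bSeq μ m = x) ∨ (∃ j, cSeq μ j = x) := by
  have hne : ∃ m : ℕ, (μ.rowLen m : ℤ) ≤ x + m := by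
    refine ⟨μ.colLen 0 + (-x).toNat, ?_⟩
    rw [rowLen_eq_zero (by omega)]
    push_cast
    omega
  classical
  let m₀ := Nat.find hne
  have hm₀ : (μ.rowLen m₀ : ℤ) ≤ x + m₀ := Nat.find_spec hne
  by_cases he : (μ.rowLen m₀ : ℤ) = x + m₀
  · exact Or.inl ⟨m₀, by unfold bSeq; omega⟩
  · right
    have hlt : (μ.rowLen m₀ : ℤ) < x + m₀ := lt_of_le_of_ne hm₀ he
    have hpos : 0 < x + (m₀ : ℤ) := by
      have h0 : (0:ℤ) ≤ (μ.rowLen m₀ : ℤ) := by positivity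
      omega
    set j : ℕ := (x + m₀ - 1).toNat with hj
    have hjz : (j : ℤ) = x + m₀ - 1 := by omega
    refine ⟨j, ?_⟩
    have hcol : μ.colLen j = m₀ := by
      have hub : μ.colLen j ≤ m₀ := by
        have : ¬ (m₀, j) ∈ μ := by
          rw [YoungDiagram.mem_iff_lt_rowLen]; omega
        rw [YoungDiagram.mem_iff_lt_colLen] at this; omega
      have hlb : m₀ ≤ μ.colLen j := by
        rcases Nat.eq_zero_or_pos m₀ with h0 | h0
        · omega
        · have hprev : ¬ (μ.rowLen (m₀ - 1) : ℤ) ≤ x + (m₀ - 1 : ℕ) :=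
            Nat.find_min hne (by omega)
          have : j < μ.rowLen (m₀ - 1) := by
            push_cast [Nat.cast_sub (by omega : 1 ≤ m₀)] at hprev ⊢
            omega
          have hm : (m₀ - 1, j) ∈ μ := YoungDiagram.mem_iff_lt_rowLen.mpr this
          rw [YoungDiagram.mem_iff_lt_colLen] at hm
          omega
      omega
    unfold cSeq
    rw [hcol]
    omega


lemma pMap_add_count (k : ℕ) (μ : YoungDiagram) (i : ℕ) :
    pMap k μ i +
      ((Finset.Icc (i+1) (i+k)).filter fun m => bSeq μ i - k ≤ bSeq μ m).card = k := by
  classical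
  set W : Finset ℤ := Finset.Icc (bSeq μ i - k) (bSeq μ i - 1) with hW
  set FB := (Finset.Icc (i+1) (i+k)).filter (fun m => bSeq μ i - k ≤ bSeq μ m) with hFB
  set FC := (Finset.range (μ.rowLen i)).filter (fun j => μ.hook (i, j) ≤ k) with hFC
  have hWcard : W.card = k := by
    rw [hW, Int.card_Icc]
    omega
  have hBsub : FB.image (bSeq μ) ⊆ W := by
    intro x hx
    rw [Finset.mem_image] at hx
    obtain ⟨m, hm, rfl⟩ := hx
    rw [hFB, Finset.mem_filter, Finset.mem_Icc] at hm
    have h1 : bSeq μ m < bSeq μ i := bSeq_strictAnti μ (by omega)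
    rw [hW, Finset.mem_Icc]
    omega
  have hCsub : FC.image (cSeq μ) ⊆ W := by
    intro x hx
    rw [Finset.mem_image] at hx
    obtain ⟨j, hj, rfl⟩ := hx
    rw [hFC, Finset.mem_filter, Finset.mem_range] at hj
    have hmem : (i, j) ∈ μ := YoungDiagram.mem_iff_lt_rowLen.mpr hj.1
    have hh := hook_cast hmem
    rw [hW, Finset.mem_Icc]
    have : (μ.hook (i, j) : ℤ) ≤ k := by exact_mod_cast hj.2
    omega
  have hcover : W ⊆ FB.image (bSeq μ) ∪ FC.image (cSeq μ) := by
    intro x hx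
    rw [hW, Finset.mem_Icc] at hx
    rcases cover μ x with ⟨m, hm⟩ | ⟨j, hj⟩
    · refine Finset.mem_union_left _ (Finset.mem_image.mpr ⟨m, ?_, hm⟩)
      rw [hFB, Finset.mem_filter, Finset.mem_Icc]
      have h1 : i < m := by
        have := (bSeq_strictAnti μ).lt_iff_gt (a := m) (b := i)
        omega
      have h2 : m ≤ i + k := by
        by_contra hc
        have h3 : bSeq μ (i + (k+1)) + (k+1 : ℕ) ≤ bSeq μ i := gap (bSeq_strictAnti μ) i (k+1)
        have h4 : bSeq μ m ≤ bSeq μ (i + (k+1)) := (bSeq_strictAnti μ).antitone (by omega)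
        push_cast at h3
        omega
      exact ⟨⟨by omega, h2⟩, by omega⟩
    · refine Finset.mem_union_right _ (Finset.mem_image.mpr ⟨j, ?_, hj⟩)
      have hjr : j < μ.rowLen i := cSeq_lt_iff.mp (by omega)
      have hmem : (i, j) ∈ μ := YoungDiagram.mem_iff_lt_rowLen.mpr hjr
      have hh := hook_cast hmem
      rw [hFC, Finset.mem_filter, Finset.mem_range]
      refine ⟨hjr, ?_⟩
      have : (μ.hook (i, j) : ℤ) ≤ k := by omega
      exact_mod_cast this
  have hdisj : Disjoint (FB.image (bSeq μ)) (FC.image (cSeq μ)) := by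
    rw [Finset.disjoint_left]
    intro x hxB hxC
    rw [Finset.mem_image] at hxB hxC
    obtain ⟨m, _, rfl⟩ := hxB
    obtain ⟨j, _, hj⟩ := hxC
    exact disj μ m j hj.symm
  have hunion : FB.image (bSeq μ) ∪ FC.image (cSeq μ) = W :=
    Finset.Subset.antisymm (Finset.union_subset hBsub hCsub) hcover
  have hcardB : (FB.image (bSeq μ)).card = FB.card :=
    Finset.card_image_of_injective _ (bSeq_strictAnti μ).injective
  have hcardC : (FC.image (cSeq μ)).card = FC.card :=
    Finset.card_image_of_injective _ (cSeq_strictMono μ).injective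
  have := Finset.card_union_of_disjoint hdisj
  rw [hunion, hWcard, hcardB, hcardC] at this
  rw [pMap, ← hFC]
  omega

lemma isCore_iff (k : ℕ) (μ : YoungDiagram) :
    μ.IsCore (k+1) ↔ ∀ i, ∃ m, bSeq μ m = bSeq μ i - (k+1) := by
  constructor
  · intro h i
    rcases cover μ (bSeq μ i - (k+1)) with ⟨m, hm⟩ | ⟨j, hj⟩
    · exact ⟨m, hm⟩
    · exfalso
      have hjr : j < μ.rowLen i := cSeq_lt_iff.mp (by omega)
      have hmem : (i, j) ∈ μ := YoungDiagram.mem_iff_lt_rowLen.mpr hjr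
      have hh := hook_cast hmem
      refine h (i, j) (by rwa [YoungDiagram.mem_cells]) ?_
      have : (μ.hook (i, j) : ℤ) = ((k+1 : ℕ) : ℤ) := by push_cast; omega
      exact_mod_cast this
  · rintro h ⟨i, j⟩ hmem hhook
    have hmem' : (i, j) ∈ μ := by rwa [YoungDiagram.mem_cells] at hmem
    have hh := hook_cast hmem'
    obtain ⟨m, hm⟩ := h i
    refine disj μ m j ?_
    rw [hm]
    have : (μ.hook (i, j) : ℤ) = ((k+1 : ℕ) : ℤ) := by exact_mod_cast hhook
    push_cast at this
    omega

lemma core_struct (k : ℕ) (μ : YoungDiagram) (i m : ℕ)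
    (hm : bSeq μ m = bSeq μ i - (k+1)) :
    i + 1 ≤ m ∧ m ≤ i + k + 1 ∧ pMap k μ i + (m - i - 1) = k := by
  have hb := bSeq_strictAnti μ
  have h1 : i < m := by
    have := hb.lt_iff_gt (a := m) (b := i)
    omega
  have h2 : m ≤ i + k + 1 := by
    by_contra hc
    have h3 : bSeq μ (i + (k+1)) + ((k+1 : ℕ) : ℤ) ≤ bSeq μ i := gap hb i (k+1)
    have h4 : bSeq μ m < bSeq μ (i + (k+1)) := hb (by omega)
    push_cast at h3
    omega
  have hFB : (Finset.Icc (i+1) (i+k)).filter (fun m' => bSeq μ i - k ≤ bSeq μ m')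
      = Finset.Ioo i m := by
    ext m'
    rw [Finset.mem_filter, Finset.mem_Icc, Finset.mem_Ioo]
    constructor
    · rintro ⟨⟨ha, hb'⟩, hc⟩
      refine ⟨by omega, ?_⟩
      by_contra hc2
      have h5 : bSeq μ m' ≤ bSeq μ m := hb.antitone (by omega)
      omega
    · rintro ⟨ha, hb'⟩
      have hgap : bSeq μ (m' + (m - m')) + ((m - m' : ℕ) : ℤ) ≤ bSeq μ m' := gap hb m' (m - m')
      have he : m' + (m - m') = m := by omega
      rw [he] at hgap
      refine ⟨⟨by omega, by omega⟩, by push_cast at hgap; omega⟩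
  have := pMap_add_count k μ i
  rw [hFB, Nat.card_Ioo] at this
  omega

lemma pMap_eventually_zero (k : ℕ) (μ : YoungDiagram) {i : ℕ} (hi : μ.colLen 0 ≤ i) :
    pMap k μ i = 0 := by
  simp [pMap, rowLen_eq_zero hi]


lemma eq_of_rowLen_eq {μ ν : YoungDiagram} (h : ∀ i, μ.rowLen i = ν.rowLen i) : μ = ν := by
  ext ⟨a, b⟩
  rw [YoungDiagram.mem_cells, YoungDiagram.mem_cells, YoungDiagram.mem_iff_lt_rowLen,
    YoungDiagram.mem_iff_lt_rowLen, h]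

lemma pMap_antitone (k : ℕ) (μ : YoungDiagram) (hc : μ.IsCore (k+1)) :
    Antitone (pMap k μ) := by
  rw [isCore_iff] at hc
  apply antitone_nat_of_succ_le
  intro i
  obtain ⟨m1, hm1⟩ := hc i
  obtain ⟨m2, hm2⟩ := hc (i+1)
  have s1 := core_struct k μ i m1 hm1
  have s2 := core_struct k μ (i+1) m2 hm2
  have hlt : m1 < m2 := by
    by_contra hcon
    have h5 : bSeq μ m1 ≤ bSeq μ m2 := (bSeq_strictAnti μ).antitone (by omega)
    have h6 : bSeq μ (i+1) < bSeq μ i := bSeq_strictAnti μ (by omega)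
    omega
  omega

lemma pMap_le (k : ℕ) (μ : YoungDiagram) (hc : μ.IsCore (k+1)) (i : ℕ) :
    pMap k μ i ≤ k := by
  rw [isCore_iff] at hc
  obtain ⟨m, hm⟩ := hc i
  have := core_struct k μ i m hm
  omega

lemma injOn_aux (k : ℕ) (μ ν : YoungDiagram) (hμ : μ.IsCore (k+1)) (hν : ν.IsCore (k+1))
    (h : pMap k μ = pMap k ν) : μ = ν := by
  rw [isCore_iff] at hμ hν
  have key : ∀ d i : ℕ, max (μ.colLen 0) (ν.colLen 0) ≤ i + d → bSeq μ i = bSeq ν i := by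
    intro d
    induction d with
    | zero =>
      intro i hi
      rw [bSeq_eq_neg (by omega), bSeq_eq_neg (by omega)]
    | succ d ih =>
      intro i hi
      by_cases hM : max (μ.colLen 0) (ν.colLen 0) ≤ i
      · rw [bSeq_eq_neg (by omega), bSeq_eq_neg (by omega)]
      · obtain ⟨m1, hm1⟩ := hμ i
        obtain ⟨m2, hm2⟩ := hν i
        have s1 := core_struct k μ i m1 hm1
        have s2 := core_struct k ν i m2 hm2
        have hpe : pMap k μ i = pMap k ν i := by rw [h]
        have hmm : m1 = m2 := by omega
        have hIH : bSeq μ m1 = bSeq ν m1 := ih m1 (by omega)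
        rw [hmm] at hIH hm1
        omega
  have hrl : ∀ i, μ.rowLen i = ν.rowLen i := by
    intro i
    have := key (max (μ.colLen 0) (ν.colLen 0)) i (by omega)
    unfold bSeq at this
    omega
  exact eq_of_rowLen_eq hrl


def recB (k N : ℕ) (t : ℕ → ℕ) : ℕ → ℕ → ℤ
  | 0, i => -(i : ℤ)
  | f+1, i => if N ≤ i then -(i : ℤ) else recB k N t f (t i) + (k + 1)

lemma recB_of_ge (k N : ℕ) (t : ℕ → ℕ) (f i : ℕ) (hi : N ≤ i) :
    recB k N t f i = -(i : ℤ) := by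
  cases f with
  | zero => rfl
  | succ f => simp [recB, hi]

lemma recB_indep (k N : ℕ) (t : ℕ → ℕ) (ht : ∀ i, i < t i) :
    ∀ f1 f2 i, N - i ≤ f1 → N - i ≤ f2 → recB k N t f1 i = recB k N t f2 i := by
  intro f1
  induction f1 with
  | zero =>
    intro f2 i h1 h2
    rw [recB_of_ge k N t f2 i (by omega)]
    rfl
  | succ f ih =>
    intro f2 i h1 h2
    by_cases hi : N ≤ i
    · rw [recB_of_ge k N t _ i hi, recB_of_ge k N t _ i hi]
    · cases f2 with
      | zero => omega
      | succ f2 =>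
        simp only [recB, if_neg hi]
        have := ht i
        rw [ih f2 (t i) (by omega) (by omega)]

/-- The beta sequence built from the step function `t`. -/
def bF (k N : ℕ) (t : ℕ → ℕ) (i : ℕ) : ℤ := recB k N t N i

lemma bF_of_ge (k N : ℕ) (t : ℕ → ℕ) {i : ℕ} (hi : N ≤ i) : bF k N t i = -(i : ℤ) :=
  recB_of_ge k N t N i hi

lemma bF_of_lt (k N : ℕ) (t : ℕ → ℕ) (ht : ∀ i, i < t i) {i : ℕ} (hi : i < N) :
    bF k N t i = bF k N t (t i) + (k + 1) := by
  obtain ⟨n, rfl⟩ : ∃ n, N = n + 1 := ⟨N - 1, by omega⟩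
  show recB k (n+1) t (n+1) i = _
  simp only [recB, if_neg (by omega : ¬ n + 1 ≤ i)]
  have := ht i
  rw [recB_indep k (n+1) t ht n (n+1) (t i) (by omega) (by omega)]
  rfl

lemma strictAnti_from (b : ℕ → ℤ) (i0 : ℕ) (hs : ∀ j, i0 ≤ j → b (j+1) < b j)
    {a c : ℕ} (ha : i0 ≤ a) (hac : a < c) : b c < b a := by
  induction c with
  | zero => omega
  | succ c ih =>
    rcases Nat.lt_or_ge a c with h | h
    · exact lt_trans (hs c (by omega)) (ih h)
    · have : a = c := by omega
      subst this
      exact hs a ha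

lemma surj_aux (k : ℕ) (f : ℕ → ℕ) (hanti : Antitone f) (hle : ∀ i, f i ≤ k)
    (N : ℕ) (hN : ∀ i ≥ N, f i = 0) :
    ∃ μ : YoungDiagram, μ.IsCore (k+1) ∧ pMap k μ = f := by
  classical
  set t : ℕ → ℕ := fun i => i + 1 + (k - f i) with htdef
  have ht : ∀ i, i < t i := fun i => by simp [htdef]; omega
  have htub : ∀ i, t i ≤ i + k + 1 := fun i => by simp [htdef]; omega
  set b : ℕ → ℤ := bF k N t with hbdef
  have hbN : ∀ i, N ≤ i → b i = -(i : ℤ) := fun i hi => bF_of_ge k N t hi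
  have hbt : ∀ i, b (t i) = b i - (k + 1) := by
    intro i
    by_cases hi : N ≤ i
    · have hf0 : f i = 0 := hN i hi
      have hti : t i = i + k + 1 := by simp only [htdef, hf0]; omega
      rw [hbN i hi, hbN (t i) (by omega), hti]
      push_cast
      ring
    · have h := bF_of_lt k N t ht (show i < N by omega)
      rw [hbdef, h]
      ring
  have hbsucc : ∀ i, b (i+1) < b i := by
    have A : ∀ d i, N ≤ i + d → b (i+1) < b i := by
      intro d
      induction d with
      | zero =>
        intro i hi
        rw [hbN i (by omega), hbN (i+1) (by omega)]
        push_cast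
        omega
      | succ d ih =>
        intro i hi
        by_cases hd : N ≤ i + d
        · exact ih i hd
        · have hsucc : ∀ j, i + 1 ≤ j → b (j+1) < b j := fun j hj => ih j (by omega)
          have h1 : b i = b (t i) + (k+1) := by have := hbt i; omega
          have h2 : b (i+1) = b (t (i+1)) + (k+1) := by have := hbt (i+1); omega
          have h3 : t i < t (i+1) := by
            have ha1 : f (i+1) ≤ f i := hanti (by omega)
            have ha2 := hle i
            have ha3 := hle (i+1)
            simp only [htdef]
            omega
          have h4 : b (t (i+1)) < b (t i) := strictAnti_from b (i+1) hsucc (ht i) h3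
          omega
    exact fun i => A N i (by omega)
  have hbanti : StrictAnti b := strictAnti_nat_of_succ_lt hbsucc
  have hnn : ∀ i, 0 ≤ b i + i := by
    intro i
    rcases Nat.lt_or_ge i N with hi | hi
    · have hg := gap hbanti i (N - i)
      have he : i + (N - i) = N := by omega
      rw [he, hbN N (le_refl N)] at hg
      push_cast at hg
      omega
    · rw [hbN i hi]; omega
  set lam : ℕ → ℕ := fun i => (b i + i).toNat with hlamdef
  have hlam_cast : ∀ i, (lam i : ℤ) = b i + i := fun i => by
    have := hnn i
    simp only [hlamdef]
    omega
  have hlam_anti : ∀ {a c : ℕ}, a ≤ c → lam c ≤ lam a := by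
    intro a c hac
    have h1 : b c ≤ b a - (c - a) := by
      have := gap hbanti a (c - a)
      have he : a + (c - a) = c := by omega
      rw [he] at this
      push_cast at this ⊢
      omega
    have h2 := hlam_cast a
    have h3 := hlam_cast c
    omega
  have hlam0 : ∀ i, N ≤ i → lam i = 0 := by
    intro i hi
    have := hlam_cast i
    rw [hbN i hi] at this
    omega
  have hsorted : ((List.range N).map lam).Pairwise (· ≥ ·) :=
    (List.pairwise_le_range (n := N)).map _ (fun _ _ hab => hlam_anti hab)
  set μ : YoungDiagram := YoungDiagram.ofRowLens _ hsorted.sortedGE with hμdef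
  have hmem : ∀ i j, (i, j) ∈ μ ↔ j < lam i := by
    intro i j
    rw [hμdef, YoungDiagram.mem_ofRowLens]
    simp only [List.length_map, List.length_range, List.getElem_map, List.getElem_range]
    constructor
    · rintro ⟨h1, h2⟩; exact h2
    · intro h
      rcases Nat.lt_or_ge i N with hi | hi
      · exact ⟨hi, h⟩
      · rw [hlam0 i hi] at h; omega
  have hrow : ∀ i, μ.rowLen i = lam i := by
    intro i
    have h1 := (YoungDiagram.mem_iff_lt_rowLen (μ := μ) (i := i) (j := lam i)).symm.trans
      (hmem i (lam i))
    have h2 := (YoungDiagram.mem_iff_lt_rowLen (μ := μ) (i := i) (j := μ.rowLen i)).symm.trans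
      (hmem i (μ.rowLen i))
    omega
  have hbseq : ∀ i, bSeq μ i = b i := by
    intro i
    unfold bSeq
    rw [hrow i, hlam_cast i]
    ring
  refine ⟨μ, ?_, ?_⟩
  · rw [isCore_iff]
    intro i
    exact ⟨t i, by rw [hbseq, hbseq, hbt i]⟩
  · funext i
    have hstruct := core_struct k μ i (t i) (by rw [hbseq, hbseq, hbt i])
    have h1 := hle i
    simp only [htdef] at hstruct
    omega

end LM

/-- The Lapointe–Morse map `𝔭` is a bijection from the set of
`(k+1)`-cores onto the set of `k`-bounded partitions (non-increasing, eventually zero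
sequences all of whose parts are at most `k`). -/
theorem pMap_bijOn_cores_kBounded (k : ℕ) (hk : 1 ≤ k) :
    Set.BijOn (pMap k) {μ : YoungDiagram | μ.IsCore (k + 1)}
      {f : ℕ → ℕ | Antitone f ∧ (∀ i, f i ≤ k) ∧ ∃ N, ∀ i ≥ N, f i = 0} := by
  refine ⟨?_, ?_, ?_⟩
  · intro μ hμ
    exact ⟨LM.pMap_antitone k μ hμ, LM.pMap_le k μ hμ, μ.colLen 0,
      fun i hi => LM.pMap_eventually_zero k μ hi⟩
  · intro μ hμ ν hν h
    exact LM.injOn_aux k μ ν hμ hν h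
  · intro f hf
    obtain ⟨hanti, hle, N, hN⟩ := hf
    obtain ⟨μ, hcore, hp⟩ := LM.surj_aux k f hanti hle N hN
    exact ⟨μ, hcore, hp⟩
end
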